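/- There exists a constant C > 0 such that for all integers g ≥ 2 and n ≥ 0 with n² ≤ g, ∑_{j=0}^{n} (n choose j) · j! · (2g + n − j − 4)! / (2g + n − 3)! ≤ C / g. -/

import Mathlib

open Finset

lemma nat_num_le : ∀ n j : ℕ, n.choose j * Nat.factorial j ≤ n ^ j := by
  intro n j
  rw [Nat.mul_comm, ← Nat.descFactorial_eq_factorial_mul_choose]
  exact Nat.descFactorial_le_pow n j

lemma nat_den_le (g n j : ℕ) (hg : 2 ≤ g) (hj : j ≤ n) :
    Nat.factorial (2 * g + n - j - 4) * (2 * g - 3) ^ (j + 1)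
      ≤ Nat.factorial (2 * g + n - 3) := by
  have h1 : (2 * g + n - j - 4) + (j + 1) = 2 * g + n - 3 := by omega
  calc Nat.factorial (2 * g + n - j - 4) * (2 * g - 3) ^ (j + 1)
      ≤ Nat.factorial (2 * g + n - j - 4) * ((2 * g + n - j - 4) + 1) ^ (j + 1) := by
        apply Nat.mul_le_mul_left
        apply Nat.pow_le_pow_left
        omega
    _ ≤ Nat.factorial ((2 * g + n - j - 4) + (j + 1)) := Nat.factorial_mul_pow_le_factorial
    _ = _ := by rw [h1]

/-- There is `C > 0` such that for all integers `g ≥ 2`, `n ≥ 0` with `n² ≤ g`,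
`∑_{j=0}^n (n choose j) j! (2g+n-j-4)! / (2g+n-3)! ≤ C/g`. -/
theorem genus_one_sum_bound :
    ∃ C > (0 : ℝ), ∀ g n : ℕ, 2 ≤ g → n ^ 2 ≤ g →
      (∑ j ∈ Finset.range (n + 1),
          ((n.choose j : ℝ) * (Nat.factorial j : ℝ) *
              (Nat.factorial (2 * g + n - j - 4) : ℝ)) /
            (Nat.factorial (2 * g + n - 3) : ℝ)) ≤
        C / (g : ℝ) := by
  refine ⟨8, by norm_num, ?_⟩
  intro g n hg hn
  by_cases hg4 : g ≤ 3
  · -- small cases: g ∈ {2,3}, n ≤ 1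
    have hn1 : n ≤ 1 := by nlinarith
    interval_cases g <;> interval_cases n <;>
      · simp [Finset.sum_range_succ, Nat.factorial]
        norm_num
  · push_neg at hg4
    -- g ≥ 4
    have h2n : 2 * n ≤ 2 * g - 3 := by
      rcases Nat.lt_or_ge n 2 with h | h
      · omega
      · have : 2 * n ≤ n * n := by nlinarith
        have : n * n = n ^ 2 := by ring
        omega
    have hgpos : (0 : ℝ) < g := by positivity
    have hdpos : (0 : ℝ) < (2 * g - 3 : ℕ) := by
      have : 1 ≤ 2 * g - 3 := by omega
      exact_mod_cast Nat.lt_of_lt_of_le Nat.zero_lt_one this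
    have key : ∀ j ∈ Finset.range (n + 1),
        ((n.choose j : ℝ) * (Nat.factorial j : ℝ) *
              (Nat.factorial (2 * g + n - j - 4) : ℝ)) /
            (Nat.factorial (2 * g + n - 3) : ℝ)
          ≤ (1 / 2) ^ j * (1 / ((2 * g - 3 : ℕ) : ℝ)) := by
      intro j hj
      rw [Finset.mem_range] at hj
      have hjn : j ≤ n := by omega
      have step1 : ((n.choose j : ℝ) * (Nat.factorial j : ℝ) *
              (Nat.factorial (2 * g + n - j - 4) : ℝ)) /
            (Nat.factorial (2 * g + n - 3) : ℝ)
          ≤ (n : ℝ) ^ j / ((2 * g - 3 : ℕ) : ℝ) ^ (j + 1) := by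
        rw [div_le_div_iff₀ (by positivity) (by positivity)]
        have hnat : (n.choose j * Nat.factorial j) * ((Nat.factorial (2 * g + n - j - 4)) * (2 * g - 3) ^ (j + 1))
            ≤ n ^ j * Nat.factorial (2 * g + n - 3) :=
          Nat.mul_le_mul (nat_num_le n j) (nat_den_le g n j hg hjn)
        calc ((n.choose j : ℝ) * (Nat.factorial j : ℝ) * (Nat.factorial (2 * g + n - j - 4) : ℝ))
              * ((2 * g - 3 : ℕ) : ℝ) ^ (j + 1)
            = (((n.choose j * Nat.factorial j) * ((Nat.factorial (2 * g + n - j - 4)) * (2 * g - 3) ^ (j + 1)) : ℕ) : ℝ) := by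
              push_cast; ring
          _ ≤ ((n ^ j * Nat.factorial (2 * g + n - 3) : ℕ) : ℝ) := by exact_mod_cast hnat
          _ = (n : ℝ) ^ j * (Nat.factorial (2 * g + n - 3) : ℝ) := by push_cast; ring
      have step2 : (n : ℝ) ^ j / ((2 * g - 3 : ℕ) : ℝ) ^ (j + 1)
          ≤ (1 / 2) ^ j * (1 / ((2 * g - 3 : ℕ) : ℝ)) := by
        have hr : (n : ℝ) / ((2 * g - 3 : ℕ) : ℝ) ≤ 1 / 2 := by
          rw [div_le_div_iff₀ hdpos (by norm_num)]
          have : (2 * n : ℝ) ≤ ((2 * g - 3 : ℕ) : ℝ) := by exact_mod_cast h2n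
          linarith
        have hrnn : (0 : ℝ) ≤ (n : ℝ) / ((2 * g - 3 : ℕ) : ℝ) := by positivity
        calc (n : ℝ) ^ j / ((2 * g - 3 : ℕ) : ℝ) ^ (j + 1)
            = ((n : ℝ) / ((2 * g - 3 : ℕ) : ℝ)) ^ j * (1 / ((2 * g - 3 : ℕ) : ℝ)) := by
              rw [pow_succ, div_pow]; ring
          _ ≤ (1 / 2) ^ j * (1 / ((2 * g - 3 : ℕ) : ℝ)) := by
              apply mul_le_mul_of_nonneg_right (pow_le_pow_left₀ hrnn hr j)
              positivity
      exact step1.trans step2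
    calc (∑ j ∈ Finset.range (n + 1),
          ((n.choose j : ℝ) * (Nat.factorial j : ℝ) *
              (Nat.factorial (2 * g + n - j - 4) : ℝ)) /
            (Nat.factorial (2 * g + n - 3) : ℝ))
        ≤ ∑ j ∈ Finset.range (n + 1), (1 / 2 : ℝ) ^ j * (1 / ((2 * g - 3 : ℕ) : ℝ)) :=
          Finset.sum_le_sum key
      _ = (∑ j ∈ Finset.range (n + 1), (1 / 2 : ℝ) ^ j) * (1 / ((2 * g - 3 : ℕ) : ℝ)) :=
          (Finset.sum_mul _ _ _).symm
      _ ≤ 2 * (1 / ((2 * g - 3 : ℕ) : ℝ)) := by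
          apply mul_le_mul_of_nonneg_right (sum_geometric_two_le _)
          positivity
      _ ≤ 8 / (g : ℝ) := by
          rw [mul_one_div, div_le_div_iff₀ hdpos hgpos]
          have : ((2 * g - 3 : ℕ) : ℝ) = 2 * (g : ℝ) - 3 := by
            push_cast [Nat.cast_sub (by omega : 3 ≤ 2 * g)]; ring
          have hgr : (2:ℝ) ≤ (g:ℝ) := by exact_mod_cast hg
          rw [this]; linarith
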